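/- Let $b, m > 0$, $h^* = \frac{2b+2}{(2b+1)^{b/(b+1)}} m^{1/(b+1)}$, and let $t_{h^*}$ be the smaller solution of $t^2(h^* - t)^{2b} = m^2$ in $(0, h^*)$. Then $t_{h^*} = \frac{h^*}{2b+2} = \frac{m^{1/(b+1)}}{(2b+1)^{b/(b+1)}}$. -/

import Mathlib

open Real Set

private lemma g_mono (b h : ℝ) (hb : 0 < b) (hh : 0 < h) :
    StrictMonoOn (fun t : ℝ => t^2 * (h - t) ^ (2*b)) (Set.Icc 0 (h/(b+1))) := by
  have hb1 : (0:ℝ) < b + 1 := by linarith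
  have hsub : h / (b+1) < h := by
    rw [div_lt_iff₀ hb1]; nlinarith
  apply strictMonoOn_of_deriv_pos (convex_Icc _ _)
  · apply ContinuousOn.mul (by fun_prop)
    apply ContinuousOn.rpow_const (by fun_prop)
    intro x hx
    left
    have : x ≤ h/(b+1) := hx.2
    have : h - x > 0 := by linarith
    linarith
  · intro x hx
    rw [interior_Icc] at hx
    obtain ⟨hx0, hx1⟩ := hx
    have hhx : 0 < h - x := by
      have := hx1.trans hsub; linarith
    have d1 : HasDerivAt (fun y : ℝ => h - y) (-1) x := (hasDerivAt_id x).const_sub h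
    have d2 : HasDerivAt (fun y : ℝ => (h - y) ^ (2*b))
        ((2*b) * (h - x) ^ (2*b - 1) * (-1)) x := by
      have := (Real.hasDerivAt_rpow_const (x := h - x) (p := 2*b) (Or.inl hhx.ne')).comp x d1
      simpa [Function.comp_def] using this
    have d3 : HasDerivAt (fun y : ℝ => y^2 * (h - y) ^ (2*b))
        ((2:ℕ) * x ^ 1 * (h - x) ^ (2*b) + x^2 * ((2*b) * (h - x) ^ (2*b - 1) * (-1))) x :=
      (hasDerivAt_pow 2 x).mul d2
    rw [d3.deriv]
    have key : (h - x) ^ (2*b) = (h - x) ^ (2*b - 1) * (h - x) := by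
      rw [← Real.rpow_add_one hhx.ne']; ring_nf
    rw [key]
    have hp : (0:ℝ) < (h - x) ^ (2*b - 1) := Real.rpow_pos_of_pos hhx _
    have hlt : x * (b + 1) < h := (lt_div_iff₀ hb1).mp hx1
    have heq : (2:ℕ) * x ^ 1 * ((h - x) ^ (2*b - 1) * (h - x))
        + x^2 * ((2*b) * (h - x) ^ (2*b - 1) * (-1))
        = 2 * (h - x) ^ (2*b - 1) * x * (h - x - b*x) := by push_cast; ring
    rw [heq]
    have : 0 < h - x - b*x := by nlinarith
    positivity

/-- The smaller solution of t²(h^* - t)^{2b} = m² in (0, h^*) equals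
h^*/(2b+2) = m^{1/(b+1)}/(2b+1)^{b/(b+1)}. -/
theorem t_hstar_eq (b m t : ℝ) (hb : 0 < b) (hm : 0 < m)
    (ht : 0 < t)
    (ht' : t < ((2*b+2) / (2*b+1) ^ (b/(b+1)) * m ^ (1/(b+1))) / (b+1))
    (he : t^2 * ((2*b+2) / (2*b+1) ^ (b/(b+1)) * m ^ (1/(b+1)) - t) ^ (2*b) = m^2) :
    t = ((2*b+2) / (2*b+1) ^ (b/(b+1)) * m ^ (1/(b+1))) / (2*b+2) ∧
    t = m ^ (1/(b+1)) / (2*b+1) ^ (b/(b+1)) := by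
  have hb1 : (0:ℝ) < b + 1 := by linarith
  have h2b1 : (0:ℝ) < 2*b + 1 := by linarith
  have h2b2 : (0:ℝ) < 2*b + 2 := by linarith
  set A : ℝ := (2*b+1) ^ (b/(b+1)) with hA
  set c : ℝ := m ^ (1/(b+1)) with hc
  have hApos : 0 < A := Real.rpow_pos_of_pos h2b1 _
  have hcpos : 0 < c := Real.rpow_pos_of_pos hm _
  set h : ℝ := (2*b+2) / A * c with hh
  have hhpos : 0 < h := by positivity
  have ht0eq : h / (2*b+2) = c / A := by
    rw [hh]; field_simp
  have ht0mem : c / A ∈ Set.Icc 0 (h/(b+1)) := by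
    have hle : h/(b+1) = 2 * (c/A) := by rw [hh]; field_simp
    constructor
    · positivity
    · rw [hle]
      have : (0:ℝ) < c/A := by positivity
      linarith
  have htmem : t ∈ Set.Icc 0 (h/(b+1)) := ⟨ht.le, ht'.le⟩
  have hsub : h - c/A = (2*b+1) * (c/A) := by
    rw [hh]; field_simp; ring
  have hcapos : (0:ℝ) < c/A := by positivity
  have hg0 : (c/A)^2 * ((2*b+1) * (c/A)) ^ (2*b) = m^2 := by
    have hMpos : (0:ℝ) < m * (2*b+1) ^ (-b) := by positivity
    have eca : c/A = (m * (2*b+1) ^ (-b)) ^ (1/(b+1)) := by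
      rw [hc, hA, Real.mul_rpow hm.le (by positivity), ← Real.rpow_mul h2b1.le,
        show -b * (1/(b+1)) = -(b/(b+1)) by ring, Real.rpow_neg h2b1.le, div_eq_mul_inv]
    rw [Real.mul_rpow h2b1.le hcapos.le,
      show (c/A)^2 = (c/A)^((2:ℝ)) from (Real.rpow_two _).symm,
      mul_comm ((2*b+1)^(2*b)) _, ← mul_assoc, ← Real.rpow_add hcapos,
      eca, ← Real.rpow_mul hMpos.le,
      show 1/(b+1) * (2+2*b) = 2 by field_simp; ring,
      Real.mul_rpow hm.le (by positivity), ← Real.rpow_mul h2b1.le,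
      mul_assoc, ← Real.rpow_add h2b1,
      show -b*2 + 2*b = 0 by ring, Real.rpow_zero, mul_one, Real.rpow_two]
  have hgt0 : (c/A)^2 * (h - c/A) ^ (2*b) = m^2 := by rw [hsub]; exact hg0
  have hmono := g_mono b h hb hhpos
  have hteq : t = c/A := hmono.injOn htmem ht0mem (show t^2*(h-t)^(2*b) = (c/A)^2*(h-c/A)^(2*b) by rw [he, hgt0])
  exact ⟨by rw [ht0eq]; exact hteq, hteq⟩
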